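/- Let p be a prime number and n, m ∈ ℕ. Call a function φ : ℤ_pⁿ → ℤ_p restricted-analytic if there exists a restricted power series f over ℤ_p in n variables with φ(x) = f(x) for all x ∈ ℤ_pⁿ. If F : ℤ_pⁿ → ℤ_p^m is a map all of whose m coordinate functions are restricted-analytic, and g : ℤ_p^m → ℤ_p is restricted-analytic, then the composition g ∘ F : ℤ_pⁿ → ℤ_p is restricted-analytic. -/

import Mathlib

/-- A family of coefficients indexed by multi-indices in `n` variables is
*restricted* if for every `m` all but finitely many coefficients are divisible
by `p^m`. -/
def IsRestricted (p : ℕ) [Fact p.Prime] {n : ℕ} (a : (Fin n → ℕ) → ℤ_[p]) : Prop :=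
  ∀ m : ℕ, {I : Fin n → ℕ | ¬ (p : ℤ_[p]) ^ m ∣ a I}.Finite

/-- A function `ℤ_pⁿ → ℤ_p` is *restricted-analytic* if it is given by
evaluation of a restricted power series over `ℤ_p` in `n` variables. -/
def RestrictedAnalytic (p : ℕ) [Fact p.Prime] {n : ℕ}
    (φ : (Fin n → ℤ_[p]) → ℤ_[p]) : Prop :=
  ∃ a : (Fin n → ℕ) → ℤ_[p], IsRestricted p a ∧
    ∀ x : Fin n → ℤ_[p], φ x = ∑' I : Fin n → ℕ, a I * ∏ i, x i ^ I i

namespace RestrictedCompAux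

open Filter Topology

variable {p : ℕ} [Fact p.Prime]

/-- Tendsto-to-zero along cofinite, in terms of finiteness of "bad" sets. -/
lemma tendsto_cofinite_iff {ι : Type*} (f : ι → ℤ_[p]) :
    Tendsto f cofinite (𝓝 0) ↔ ∀ ε : ℝ, 0 < ε → {i | ε ≤ ‖f i‖}.Finite := by
  simp only [Metric.tendsto_nhds, eventually_cofinite, dist_zero_right, not_lt]

lemma dvd_iff_norm_le {z : ℤ_[p]} {M : ℕ} :
    (p : ℤ_[p]) ^ M ∣ z ↔ ‖z‖ ≤ (p : ℝ) ^ (-(M : ℤ)) := by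
  rw [PadicInt.norm_le_pow_iff_mem_span_pow, Ideal.mem_span_singleton]

lemma isRestricted_iff {n : ℕ} (a : (Fin n → ℕ) → ℤ_[p]) :
    IsRestricted p a ↔ Tendsto a cofinite (𝓝 0) := by
  have hp1 : (1 : ℝ) < p := by
    exact_mod_cast (Fact.out (p := p.Prime)).one_lt
  have hp0 : (0 : ℝ) < p := lt_trans one_pos hp1
  rw [tendsto_cofinite_iff]
  constructor
  · intro h ε hε
    obtain ⟨M, hM⟩ : ∃ M : ℕ, ((p : ℝ)⁻¹) ^ M < ε :=
      exists_pow_lt_of_lt_one hε (by rw [inv_lt_one_iff₀]; right; exact hp1)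
    have hM' : (p : ℝ) ^ (-(M : ℤ)) < ε := by
      rwa [zpow_neg, zpow_natCast, ← inv_pow]
    refine (h M).subset ?_
    intro I hI
    simp only [Set.mem_setOf_eq] at hI ⊢
    intro hdvd
    have h1 : ‖a I‖ ≤ (p : ℝ) ^ (-(M : ℤ)) := dvd_iff_norm_le.mp hdvd
    exact absurd (le_trans hI h1) (not_le.mpr hM')
  · intro h M
    refine (h ((p : ℝ) ^ (-(M : ℤ))) (by positivity)).subset ?_
    intro I hI
    simp only [Set.mem_setOf_eq] at hI ⊢
    rw [dvd_iff_norm_le] at hI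
    exact le_of_not_ge hI

lemma norm_prod_le_single {γ : Type*} [Fintype γ] (h : γ → ℤ_[p]) (γ0 : γ) :
    ‖∏ g, h g‖ ≤ ‖h γ0‖ := by
  classical
  rw [← Finset.mul_prod_erase Finset.univ h (Finset.mem_univ γ0)]
  calc ‖h γ0 * ∏ g ∈ Finset.univ.erase γ0, h g‖
      ≤ ‖h γ0‖ * ‖∏ g ∈ Finset.univ.erase γ0, h g‖ := norm_mul_le _ _
    _ ≤ ‖h γ0‖ * 1 :=
        mul_le_mul_of_nonneg_left (PadicInt.norm_le_one _) (norm_nonneg _)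
    _ = ‖h γ0‖ := mul_one _

lemma norm_mul_le_left (z w : ℤ_[p]) : ‖z * w‖ ≤ ‖z‖ :=
  (norm_mul_le z w).trans
    (by simpa using mul_le_mul_of_nonneg_left (PadicInt.norm_le_one w) (norm_nonneg z))

lemma norm_mul_le_right (z w : ℤ_[p]) : ‖z * w‖ ≤ ‖w‖ :=
  (norm_mul_le z w).trans
    (by simpa using mul_le_mul_of_nonneg_right (PadicInt.norm_le_one z) (norm_nonneg w))

lemma summable_mul_prod {ι κ : Type*} {f : ι → ℤ_[p]} {g : κ → ℤ_[p]}
    (hf : Summable f) (hg : Summable g) :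
    Summable (fun q : ι × κ => f q.1 * g q.2) := by
  apply NonarchimedeanAddGroup.summable_of_tendsto_cofinite_zero
  rw [tendsto_cofinite_iff]
  intro ε hε
  have h1 := (tendsto_cofinite_iff f).mp hf.tendsto_cofinite_zero ε hε
  have h2 := (tendsto_cofinite_iff g).mp hg.tendsto_cofinite_zero ε hε
  refine (h1.prod h2).subset ?_
  rintro ⟨i, j⟩ hij
  simp only [Set.mem_setOf_eq] at hij
  exact ⟨le_trans hij (norm_mul_le_left _ _), le_trans hij (norm_mul_le_right _ _)⟩

/-- Finite (dependent) products of summable families: summability of the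
product family together with the interchange of product and sum. -/
lemma prod_tsum : ∀ {k : ℕ} (ι : Fin k → Type) (u : ∀ j, ι j → ℤ_[p]),
    (∀ j, Summable (u j)) →
    Summable (fun d : ∀ j, ι j => ∏ j, u j (d j)) ∧
      (∏ j, ∑' i, u j i) = ∑' d : ∀ j, ι j, ∏ j, u j (d j) := by
  intro k
  induction k with
  | zero =>
    intro ι u _
    have huniq : ∀ d : ∀ j : Fin 0, ι j, d = (default : ∀ j : Fin 0, ι j) :=
      fun d => Subsingleton.elim _ _
    have hval : ∀ d : ∀ j : Fin 0, ι j, (∏ j, u j (d j)) = 1 := fun d => by simp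
    constructor
    · exact (hasSum_single (f := fun d : ∀ j : Fin 0, ι j => ∏ j, u j (d j))
        default (fun b' hb' => absurd (huniq b') hb')).summable
    · rw [tsum_eq_single (default : ∀ j : Fin 0, ι j)
        (fun b' hb' => absurd (huniq b') hb')]
      simp
  | succ k ih =>
    intro ι u hu
    obtain ⟨hS, hE⟩ := ih (fun j => ι j.succ) (fun j => u j.succ) (fun j => hu j.succ)
    set e := Fin.consEquiv ι with he
    have hprod : Summable (fun q : ι 0 × (∀ j : Fin k, ι j.succ) =>
        u 0 q.1 * ∏ j, u j.succ (q.2 j)) := by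
      have h := summable_mul_prod (hu 0) hS
      exact h
    have key : ∀ q : ι 0 × (∀ j : Fin k, ι j.succ),
        u 0 q.1 * ∏ j, u j.succ (q.2 j) = ∏ j, u j (e q j) := by
      rintro ⟨i0, d⟩
      rw [Fin.prod_univ_succ]
      simp [he, Fin.consEquiv]
    constructor
    · exact e.summable_iff.mp ((hprod.congr key) :
        Summable ((fun d : ∀ j, ι j => ∏ j, u j (d j)) ∘ e))
    · calc (∏ j : Fin (k + 1), ∑' i, u j i)
          = (∑' i, u 0 i) * ∏ j : Fin k, ∑' i, u j.succ i := Fin.prod_univ_succ _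
        _ = (∑' i, u 0 i) * ∑' d : ∀ j : Fin k, ι j.succ, ∏ j, u j.succ (d j) := by
            rw [hE]
        _ = ∑' q : ι 0 × (∀ j : Fin k, ι j.succ), u 0 q.1 * ∏ j, u j.succ (q.2 j) :=
            Summable.tsum_mul_tsum (hu 0) hS hprod
        _ = ∑' q, ∏ j, u j (e q j) := tsum_congr key
        _ = ∑' d : ∀ j, ι j, ∏ j, u j (d j) := by
            have h := e.tsum_eq (fun d : ∀ j, ι j => ∏ j, u j (d j))
            exact h

lemma dvd_tsum {ι : Type*} (f : ι → ℤ_[p]) (M : ℕ)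
    (h : ∀ i, (p : ℤ_[p]) ^ M ∣ f i) : (p : ℤ_[p]) ^ M ∣ ∑' i, f i := by
  rw [dvd_iff_norm_le]
  refine IsUltrametricDist.norm_tsum_le_of_forall_le_of_nonneg (by positivity) ?_
  intro i
  exact dvd_iff_norm_le.mp (h i)

/-- The master index type for composition: an outer multi-index `J` in `m`
variables, together with, for each `j`, a `J j`-tuple of multi-indices in `n`
variables. -/
abbrev Idx (n m : ℕ) := Σ J : Fin m → ℕ, ∀ j, Fin (J j) → (Fin n → ℕ)

noncomputable def coeffT {n m : ℕ} (b : (Fin m → ℕ) → ℤ_[p]) (a : Fin m → (Fin n → ℕ) → ℤ_[p])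
    (t : Idx n m) : ℤ_[p] :=
  b t.1 * ∏ j, ∏ s, a j (t.2 j s)

def degT {n m : ℕ} (t : Idx n m) : Fin n → ℕ := fun i => ∑ j, ∑ s, t.2 j s i

lemma bad_finite {n m : ℕ} (b : (Fin m → ℕ) → ℤ_[p]) (a : Fin m → (Fin n → ℕ) → ℤ_[p])
    (hb : Tendsto b cofinite (𝓝 0)) (ha : ∀ j, Tendsto (a j) cofinite (𝓝 0))
    (ε : ℝ) (hε : 0 < ε) :
    {t : Idx n m | ε ≤ ‖coeffT b a t‖}.Finite := by
  have hSb := (tendsto_cofinite_iff b).mp hb ε hε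
  have hSa := fun j => (tendsto_cofinite_iff (a j)).mp (ha j) ε hε
  have key : {t : Idx n m | ε ≤ ‖coeffT b a t‖} ⊆
      ⋃ J ∈ {J : Fin m → ℕ | ε ≤ ‖b J‖}, Sigma.mk J ''
        (Set.pi Set.univ fun j => Set.pi Set.univ fun _s => {I | ε ≤ ‖a j I‖}) := by
    rintro ⟨J, d⟩ ht
    simp only [Set.mem_setOf_eq, coeffT] at ht
    have hJ : ε ≤ ‖b J‖ := le_trans ht (norm_mul_le_left _ _)
    have hd : ∀ j s, ε ≤ ‖a j (d j s)‖ := by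
      intro j s
      refine le_trans ht ?_
      calc ‖b J * ∏ j, ∏ s, a j (d j s)‖
          ≤ ‖∏ j, ∏ s, a j (d j s)‖ := norm_mul_le_right _ _
        _ ≤ ‖∏ s, a j (d j s)‖ := norm_prod_le_single _ j
        _ ≤ ‖a j (d j s)‖ := norm_prod_le_single _ s
    refine Set.mem_biUnion hJ ⟨d, ?_, rfl⟩
    simp only [Set.mem_pi, Set.mem_univ, forall_true_left, Set.mem_setOf_eq]
    exact fun j s => hd j s
  refine (Set.Finite.biUnion hSb fun J _ => Set.Finite.image _ ?_).subset key
  exact Set.Finite.pi fun j => Set.Finite.pi fun _s => hSa j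

end RestrictedCompAux

open RestrictedCompAux Filter Topology in
/-- Stability under composition: the composition of a restricted-analytic
function with a map all of whose coordinates are restricted-analytic is again
restricted-analytic. -/
theorem restrictedAnalytic_comp (p : ℕ) [Fact p.Prime] (n m : ℕ)
    (F : (Fin n → ℤ_[p]) → Fin m → ℤ_[p])
    (hF : ∀ j : Fin m, RestrictedAnalytic p fun x => F x j)
    (g : (Fin m → ℤ_[p]) → ℤ_[p]) (hg : RestrictedAnalytic p g) :
    RestrictedAnalytic p (g ∘ F) := by
  obtain ⟨b, hb, hgb⟩ := hg
  choose a ha haF using hF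
  have haF' : ∀ (j : Fin m) (x : Fin n → ℤ_[p]),
      F x j = ∑' I : Fin n → ℕ, a j I * ∏ i, x i ^ I i := fun j x => haF j x
  have hbt : Tendsto b cofinite (𝓝 0) := (isRestricted_iff b).mp hb
  have hat : ∀ j, Tendsto (a j) cofinite (𝓝 0) := fun j => (isRestricted_iff _).mp (ha j)
  refine ⟨fun K => ∑' t : (degT ⁻¹' {K} : Set (Idx n m)), coeffT b a t.1, ?_, ?_⟩
  · -- the composed coefficient family is restricted
    intro M
    have hp0 : (0 : ℝ) < p := by exact_mod_cast (Fact.out (p := p.Prime)).pos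
    have hfin := bad_finite b a hbt hat ((p : ℝ) ^ (-(M : ℤ))) (zpow_pos hp0 _)
    refine (hfin.image degT).subset ?_
    intro K hK
    simp only [Set.mem_setOf_eq] at hK
    by_contra hKim
    refine hK (dvd_tsum _ M ?_)
    rintro ⟨t, ht⟩
    by_contra hdvd
    rw [dvd_iff_norm_le, not_le] at hdvd
    exact hKim ⟨t, hdvd.le, ht⟩
  · -- evaluation of the composed series
    intro x
    have hsum_term : Summable (fun t : Idx n m => coeffT b a t * ∏ i, x i ^ degT t i) := by
      apply NonarchimedeanAddGroup.summable_of_tendsto_cofinite_zero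
      rw [tendsto_cofinite_iff]
      intro ε hε
      refine (bad_finite b a hbt hat ε hε).subset ?_
      intro t ht
      simp only [Set.mem_setOf_eq] at ht ⊢
      exact le_trans ht (norm_mul_le_left _ _)
    -- the sum over `J` of the inner expansions
    have hsummand : ∀ J : Fin m → ℕ,
        b J * ∏ j, (F x j) ^ (J j) =
          ∑' d : ∀ j, Fin (J j) → (Fin n → ℕ),
            coeffT b a ⟨J, d⟩ * ∏ i, x i ^ degT (⟨J, d⟩ : Idx n m) i := by
      intro J
      have hsum_aj : ∀ j, Summable (fun I : Fin n → ℕ => a j I * ∏ i, x i ^ I i) := by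
        intro j
        apply NonarchimedeanAddGroup.summable_of_tendsto_cofinite_zero
        rw [tendsto_cofinite_iff]
        intro ε hε
        refine ((tendsto_cofinite_iff (a j)).mp (hat j) ε hε).subset ?_
        intro I hI
        simp only [Set.mem_setOf_eq] at hI ⊢
        exact le_trans hI (norm_mul_le_left _ _)
      have inner : ∀ j : Fin m,
          Summable (fun e : Fin (J j) → (Fin n → ℕ) =>
            ∏ s, (a j (e s) * ∏ i, x i ^ e s i)) ∧
          (F x j) ^ (J j) =
            ∑' e : Fin (J j) → (Fin n → ℕ), ∏ s, (a j (e s) * ∏ i, x i ^ e s i) := by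
        intro j
        obtain ⟨hS, hE⟩ := prod_tsum (fun _ : Fin (J j) => (Fin n → ℕ))
          (fun _ I => a j I * ∏ i, x i ^ I i) (fun _ => hsum_aj j)
        refine ⟨hS, ?_⟩
        rw [← hE, Finset.prod_const, Finset.card_univ, Fintype.card_fin, haF' j x]
      obtain ⟨hSd, hEd⟩ := prod_tsum (fun j => Fin (J j) → (Fin n → ℕ))
        (fun j e => ∏ s, (a j (e s) * ∏ i, x i ^ e s i)) (fun j => (inner j).1)
      have hmono : ∀ d : ∀ j, Fin (J j) → (Fin n → ℕ),
          (∏ j, ∏ s, ∏ i, x i ^ d j s i) = ∏ i, x i ^ (∑ j, ∑ s, d j s i) := by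
        intro d
        calc (∏ j, ∏ s, ∏ i, x i ^ d j s i)
            = ∏ j, ∏ i, ∏ s, x i ^ d j s i :=
              Finset.prod_congr rfl fun j _ => Finset.prod_comm
          _ = ∏ i, ∏ j, ∏ s, x i ^ d j s i := Finset.prod_comm
          _ = ∏ i, ∏ j, x i ^ (∑ s, d j s i) := by
              refine Finset.prod_congr rfl fun i _ => Finset.prod_congr rfl fun j _ => ?_
              rw [Finset.prod_pow_eq_pow_sum]
          _ = ∏ i, x i ^ (∑ j, ∑ s, d j s i) := by
              refine Finset.prod_congr rfl fun i _ => ?_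
              rw [Finset.prod_pow_eq_pow_sum]
      have rearr : ∀ d : ∀ j, Fin (J j) → (Fin n → ℕ),
          b J * ∏ j, ∏ s, (a j (d j s) * ∏ i, x i ^ d j s i) =
            coeffT b a ⟨J, d⟩ * ∏ i, x i ^ degT (⟨J, d⟩ : Idx n m) i := by
        intro d
        have hsplit : (∏ j, ∏ s, (a j (d j s) * ∏ i, x i ^ d j s i)) =
            (∏ j, ∏ s, a j (d j s)) * (∏ j, ∏ s, ∏ i, x i ^ d j s i) := by
          rw [← Finset.prod_mul_distrib]
          exact Finset.prod_congr rfl fun j _ => Finset.prod_mul_distrib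
        simp only [coeffT, degT]
        rw [hsplit, hmono d, mul_assoc]
      calc b J * ∏ j, (F x j) ^ (J j)
          = b J * ∏ j, ∑' e : Fin (J j) → (Fin n → ℕ),
              ∏ s, (a j (e s) * ∏ i, x i ^ e s i) := by
            rw [Finset.prod_congr rfl fun j _ => (inner j).2]
        _ = b J * ∑' d : ∀ j, Fin (J j) → (Fin n → ℕ),
              ∏ j, ∏ s, (a j (d j s) * ∏ i, x i ^ d j s i) := by rw [hEd]
        _ = ∑' d : ∀ j, Fin (J j) → (Fin n → ℕ),
              b J * ∏ j, ∏ s, (a j (d j s) * ∏ i, x i ^ d j s i) := by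
            have h := hSd.tsum_mul_left (b J)
            exact h.symm
        _ = ∑' d : ∀ j, Fin (J j) → (Fin n → ℕ),
              coeffT b a ⟨J, d⟩ * ∏ i, x i ^ degT (⟨J, d⟩ : Idx n m) i :=
            tsum_congr rearr
    have hsum_coeff : Summable (coeffT b a) := by
      apply NonarchimedeanAddGroup.summable_of_tendsto_cofinite_zero
      rw [tendsto_cofinite_iff]
      exact fun ε hε => bad_finite b a hbt hat ε hε
    -- regroup the master sum by total degree
    have hfib := hsum_term.hasSum.tsum_fiberwise degT
    have heach : ∀ K : Fin n → ℕ,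
        (∑' t : (degT ⁻¹' {K} : Set (Idx n m)),
            coeffT b a t.1 * ∏ i, x i ^ degT t.1 i) =
          (∑' t : (degT ⁻¹' {K} : Set (Idx n m)), coeffT b a t.1) * ∏ i, x i ^ K i := by
      intro K
      calc (∑' t : (degT ⁻¹' {K} : Set (Idx n m)),
              coeffT b a t.1 * ∏ i, x i ^ degT t.1 i)
          = ∑' t : (degT ⁻¹' {K} : Set (Idx n m)),
              coeffT b a t.1 * ∏ i, x i ^ K i := by
            refine tsum_congr ?_
            rintro ⟨t, ht⟩
            simp only [Set.mem_preimage, Set.mem_singleton_iff] at ht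
            rw [ht]
        _ = (∑' t : (degT ⁻¹' {K} : Set (Idx n m)), coeffT b a t.1) * ∏ i, x i ^ K i := by
            have h := (hsum_coeff.subtype (degT ⁻¹' {K})).tsum_mul_right (∏ i, x i ^ K i)
            exact h
    have hfib' : HasSum
        (fun K : Fin n → ℕ =>
          (∑' t : (degT ⁻¹' {K} : Set (Idx n m)), coeffT b a t.1) * ∏ i, x i ^ K i)
        (∑' t : Idx n m, coeffT b a t * ∏ i, x i ^ degT t i) := by
      have := hfib
      rwa [funext heach] at this
    calc (g ∘ F) x = g (F x) := rfl
      _ = ∑' J : Fin m → ℕ, b J * ∏ j, (F x j) ^ (J j) := hgb (F x)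
      _ = ∑' J : Fin m → ℕ, ∑' d : ∀ j, Fin (J j) → (Fin n → ℕ),
            coeffT b a ⟨J, d⟩ * ∏ i, x i ^ degT (⟨J, d⟩ : Idx n m) i :=
          tsum_congr hsummand
      _ = ∑' t : Idx n m, coeffT b a t * ∏ i, x i ^ degT t i :=
          (Summable.tsum_sigma hsum_term).symm
      _ = _ := hfib'.tsum_eq.symm
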